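/- Let Q be a real d×d matrix, λ ∈ ℝ^d, n ∈ ℕ, all regarded as complex. Let A be the (n+1)×(n+1) matrix with A_{ii} = −(n−i), A_{i+1,i} = n−i, other entries zero, and let 𝐐 = A ⊗ diag(λ) + I_{n+1} ⊗ Q. For u ∈ ℝ let e(u) = (1, e^{iu}, …, e^{niu}) ∈ ℂ^{n+1}. Then for every s ∈ ℝ, every x ∈ ℂ^d and every index 0 ≤ k ≤ n, (e(u)ᵀ ⊗ I_d) · exp(s𝐐) · (e_k ⊗ x) = ∑_{j=k}^{n} C(n−k, j−k) · (1 − e^{iu})^{n−j} · e^{iuj} · exp(s(Q − (n−j)·diag(λ))) · x. -/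

import Mathlib

open Kronecker NormedSpace Matrix

/- ### Auxiliary scalar lemmas -/

lemma alt_sum (b : ℕ) :
    ∑ t ∈ Finset.range (b+1), (-1:ℂ)^(b-t) * (b.choose t) = if b = 0 then 1 else 0 := by
  have h := add_pow (1:ℂ) (-1) b
  simp only [one_pow, one_mul, add_neg_cancel] at h
  rw [zero_pow_eq] at h
  rw [← h]

lemma inv_entry (n i j : ℕ) (hi : i ≤ n) :
    ∑ p ∈ Finset.range (n+1),
      ((if p ≤ i then (-1:ℂ)^(i-p) * ((n-p).choose (i-p)) else 0) *
       (if j ≤ p then (((n-j).choose (p-j) : ℕ):ℂ) else 0)) = if i = j then 1 else 0 := by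
  by_cases hji : j ≤ i
  · rw [← Finset.sum_subset (show Finset.Icc j i ⊆ Finset.range (n+1) by
        intro p hp; simp only [Finset.mem_Icc] at hp; simp only [Finset.mem_range]; omega)]
    · rw [← Finset.Ico_add_one_right_eq_Icc, Finset.sum_Ico_eq_sum_range]
      have hb : i + 1 - j = (i - j) + 1 := by omega
      rw [hb]
      set a := n - j with ha
      set b := i - j with hbd
      have key : ∀ t ∈ Finset.range (b+1),
          ((if j + t ≤ i then (-1:ℂ)^(i-(j+t)) * ((n-(j+t)).choose (i-(j+t))) else 0) *
           (if j ≤ j + t then (((n-j).choose (j+t-j) : ℕ):ℂ) else 0))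
          = ((a.choose b : ℕ) : ℂ) * ((-1:ℂ)^(b-t) * (b.choose t)) := by
        intro t ht
        have ht' : t ≤ b := by simp at ht; omega
        rw [if_pos (by omega), if_pos (by omega)]
        have e1 : i - (j+t) = b - t := by omega
        have e2 : n - (j+t) = a - t := by omega
        have e3 : j + t - j = t := by omega
        rw [e1, e2, e3]
        have hcm := Nat.choose_mul (n := a) ht'
        have hc : ((a.choose b * b.choose t : ℕ) : ℂ) = ((a.choose t * ((a-t).choose (b-t)) : ℕ) : ℂ) := by
          rw [hcm]
        push_cast at hc
        linear_combination (-(-1:ℂ)^(b-t)) * hc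
      rw [Finset.sum_congr rfl key, ← Finset.mul_sum, alt_sum]
      by_cases hij : i = j
      · rw [if_pos hij]
        have hb0 : b = 0 := by omega
        rw [hb0]
        simp
      · rw [if_neg hij, if_neg (by omega)]
        ring
    · intro p hp hnp
      simp only [Finset.mem_Icc, not_and] at hnp
      by_cases h1 : p ≤ i
      · rw [if_neg (show ¬ j ≤ p from fun h => hnp h h1), mul_zero]
      · rw [if_neg h1, zero_mul]
  · rw [if_neg (by omega)]
    apply Finset.sum_eq_zero
    intro p hp
    by_cases h1 : p ≤ i
    · rw [if_neg (show ¬ j ≤ p by omega), mul_zero]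
    · rw [if_neg h1, zero_mul]

lemma row_sum (n p : ℕ) (hp : p ≤ n) (z : ℂ) :
    ∑ j ∈ Finset.range (n+1),
      z^j * (if p ≤ j then ((-1:ℂ)^(j-p) * (((n-p).choose (j-p) : ℕ):ℂ)) else 0)
      = z^p * (1-z)^(n-p) := by
  simp_rw [mul_ite, mul_zero]
  rw [← Finset.sum_subset (show Finset.Icc p n ⊆ Finset.range (n+1) by
      intro q hq; simp only [Finset.mem_Icc] at hq; simp only [Finset.mem_range]; omega)]
  · rw [← Finset.Ico_add_one_right_eq_Icc, Finset.sum_Ico_eq_sum_range]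
    have hb : n + 1 - p = (n - p) + 1 := by omega
    rw [hb]
    have key : ∀ t ∈ Finset.range ((n-p)+1),
        (if p ≤ p + t then z^(p+t) * ((-1:ℂ)^(p+t-p) * (((n-p).choose (p+t-p) : ℕ):ℂ)) else 0)
        = z^p * ((-z)^t * (1:ℂ)^(n-p-t) * ((n-p).choose t)) := by
      intro t ht
      rw [if_pos (by omega)]
      have e3 : p + t - p = t := by omega
      rw [e3, pow_add]
      rw [neg_pow z t]
      ring
    rw [Finset.sum_congr rfl key, ← Finset.mul_sum, ← add_pow (-z) 1 (n-p)]
    congr 1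
    ring
  · intro q hq hnq
    simp only [Finset.mem_Icc, not_and, Finset.mem_range] at hnq hq
    rw [if_neg (fun h => absurd (hnq h) (by omega))]

/- ### The eigenvector matrices -/

noncomputable def Sm (n : ℕ) : Matrix (Fin (n+1)) (Fin (n+1)) ℂ :=
  Matrix.of fun i j => if (j:ℕ) ≤ (i:ℕ) then
    (-1:ℂ)^((i:ℕ)-(j:ℕ)) * (((n-(j:ℕ)).choose ((i:ℕ)-(j:ℕ)) : ℕ) : ℂ) else 0

noncomputable def Tm (n : ℕ) : Matrix (Fin (n+1)) (Fin (n+1)) ℂ :=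
  Matrix.of fun i j => if (j:ℕ) ≤ (i:ℕ) then
    (((n-(j:ℕ)).choose ((i:ℕ)-(j:ℕ)) : ℕ) : ℂ) else 0

noncomputable def Lam (n : ℕ) : Matrix (Fin (n+1)) (Fin (n+1)) ℂ :=
  Matrix.diagonal (fun j : Fin (n+1) => -(((n - (j:ℕ) : ℕ)) : ℂ))

lemma SmTm (n : ℕ) : Sm n * Tm n = 1 := by
  ext i j
  rw [Matrix.mul_apply]
  have h : ∀ p : Fin (n+1), Sm n i p * Tm n p j
      = ((if (p:ℕ) ≤ (i:ℕ) then (-1:ℂ)^((i:ℕ)-(p:ℕ)) * ((n-(p:ℕ)).choose ((i:ℕ)-(p:ℕ))) else 0) *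
         (if (j:ℕ) ≤ (p:ℕ) then (((n-(j:ℕ)).choose ((p:ℕ)-(j:ℕ)) : ℕ):ℂ) else 0)) := fun p => rfl
  rw [Finset.sum_congr rfl (fun p _ => h p)]
  rw [Fin.sum_univ_eq_sum_range (fun p =>
      ((if p ≤ (i:ℕ) then (-1:ℂ)^((i:ℕ)-p) * ((n-p).choose ((i:ℕ)-p)) else 0) *
       (if (j:ℕ) ≤ p then (((n-(j:ℕ)).choose (p-(j:ℕ)) : ℕ):ℂ) else 0)))]
  rw [inv_entry n i j i.is_le]
  rw [Matrix.one_apply]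
  congr 1
  simp [Fin.val_eq_val, eq_iff_iff]

lemma eigen (n : ℕ) (A : Matrix (Fin (n+1)) (Fin (n+1)) ℂ)
    (hA : ∀ i j : Fin (n + 1), A i j =
      if i = j then -((n - (i : ℕ) : ℕ) : ℂ)
      else if (i : ℕ) = (j : ℕ) + 1 then ((n - (j : ℕ) : ℕ) : ℂ) else 0) :
    A * Sm n = Sm n * Lam n := by
  ext i j
  rw [Matrix.mul_apply, Lam, Matrix.mul_diagonal]
  rcases Fin.eq_zero_or_eq_succ i with rfl | ⟨i', rfl⟩
  · have hsplit : ∀ p : Fin (n+1), A 0 p * Sm n p j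
        = if p = 0 then (-((n:ℕ):ℂ)) * Sm n p j else 0 := by
      intro p
      rw [hA]
      by_cases hp : (0 : Fin (n+1)) = p
      · rw [if_pos hp, if_pos hp.symm, ← hp]
        norm_num
      · rw [if_neg hp, if_neg (by simp only [Fin.val_zero]; omega),
          if_neg (fun h => hp h.symm), zero_mul]
    rw [Finset.sum_congr rfl (fun p _ => hsplit p), Finset.sum_ite_eq' Finset.univ 0]
    rw [if_pos (Finset.mem_univ _)]
    by_cases hj : j = 0
    · subst hj
      simp [Sm]
    · have : ¬ ((j:ℕ) ≤ ((0 : Fin (n+1)):ℕ)) := by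
        simp only [Fin.val_zero, Nat.le_zero]
        exact fun h => hj (Fin.ext (by simp [h]))
      simp only [Sm, Matrix.of_apply, if_neg this]
      ring
  · set i := i'.succ with hi
    set ic := i'.castSucc with hic
    have hvi : (i : ℕ) = (i' : ℕ) + 1 := rfl
    have hvic : (ic : ℕ) = (i' : ℕ) := rfl
    have hine : i ≠ ic := by
      intro h; apply_fun (Fin.val) at h; omega
    have hsplit : ∀ p : Fin (n+1), A i p * Sm n p j
        = (if p = i then (-((n - (i:ℕ) :ℕ):ℂ)) * Sm n p j else 0)
          + (if p = ic then (((n - (i':ℕ) :ℕ):ℂ)) * Sm n p j else 0) := by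
      intro p
      rw [hA]
      by_cases hp : p = i
      · rw [if_pos (hp.symm), if_pos hp, if_neg (fun h => hine (hp.symm.trans h)), add_zero]
      · rw [if_neg (fun h => hp h.symm)]
        by_cases hp2 : p = ic
        · rw [if_pos hp2, if_neg hp, if_pos (by rw [hp2, hvic]; exact hvi), zero_add, hp2, hvic]
        · rw [if_neg (show ¬ ((i:ℕ) = (p:ℕ) + 1) by
            intro h
            apply hp2
            apply Fin.ext
            omega), zero_mul, if_neg hp, if_neg hp2, add_zero]
    rw [Finset.sum_congr rfl (fun p _ => hsplit p), Finset.sum_add_distrib,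
      Finset.sum_ite_eq' Finset.univ i, Finset.sum_ite_eq' Finset.univ ic,
      if_pos (Finset.mem_univ _), if_pos (Finset.mem_univ _)]
    have hin : (i : ℕ) ≤ n := i.is_le
    by_cases hji : (j : ℕ) ≤ (i' : ℕ)
    · have hSi : Sm n i j = (-1:ℂ)^((i:ℕ)-(j:ℕ)) * (((n-(j:ℕ)).choose ((i:ℕ)-(j:ℕ)) : ℕ) : ℂ) := by
        rw [Sm, Matrix.of_apply, if_pos (by omega)]
      have hSic : Sm n ic j = (-1:ℂ)^((i':ℕ)-(j:ℕ)) * (((n-(j:ℕ)).choose ((i':ℕ)-(j:ℕ)) : ℕ) : ℂ) := by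
        rw [Sm, Matrix.of_apply, if_pos (by rw [hvic]; omega), hvic]
      rw [hSi, hSic]
      have hch : (n-(j:ℕ)).choose ((i:ℕ)-(j:ℕ)) * ((i:ℕ)-(j:ℕ))
          = (n-(j:ℕ)).choose ((i':ℕ)-(j:ℕ)) * (n-(i':ℕ)) := by
        have h := Nat.choose_succ_right_eq (n-(j:ℕ)) ((i':ℕ)-(j:ℕ))
        have e1 : (i':ℕ)-(j:ℕ)+1 = (i:ℕ)-(j:ℕ) := by omega
        have e2 : (n-(j:ℕ)) - ((i':ℕ)-(j:ℕ)) = n - (i':ℕ) := by omega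
        rw [e1, e2] at h
        exact h
      have hchc : ((((n-(j:ℕ)).choose ((i:ℕ)-(j:ℕ)) * ((i:ℕ)-(j:ℕ)) : ℕ)) : ℂ)
          = (((n-(j:ℕ)).choose ((i':ℕ)-(j:ℕ)) * (n-(i':ℕ)) : ℕ) : ℂ) := by rw [hch]
      push_cast at hchc
      have hij : ((i:ℕ)-(j:ℕ)) = ((i':ℕ)-(j:ℕ)) + 1 := by omega
      rw [hij, pow_succ]
      have c1 : (((i:ℕ)-(j:ℕ) : ℕ) : ℂ) = ((n - (j:ℕ) : ℕ) : ℂ) - ((n - (i:ℕ) : ℕ) : ℂ) := by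
        have : (n - (j:ℕ)) = (n - (i:ℕ)) + ((i:ℕ)-(j:ℕ)) := by omega
        rw [this]; push_cast; ring
      rw [c1] at hchc
      rw [hij] at hchc
      linear_combination (-(-1:ℂ)^((i':ℕ)-(j:ℕ))) * hchc
    · by_cases hji2 : (j:ℕ) ≤ (i:ℕ)
      · have hj : (j : ℕ) = (i : ℕ) := by omega
        have hSi : Sm n i j = 1 := by
          rw [Sm, Matrix.of_apply, if_pos (by omega), hj]
          simp
        have hSic : Sm n ic j = 0 := by
          rw [Sm, Matrix.of_apply, if_neg (by omega)]
        rw [hSi, hSic, hj]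
        ring
      · have hSi : Sm n i j = 0 := by rw [Sm, Matrix.of_apply, if_neg (by omega)]
        have hSic : Sm n ic j = 0 := by rw [Sm, Matrix.of_apply, if_neg (by omega)]
        rw [hSi, hSic]
        ring

/- ### exp commutes with reindex -/

theorem exp_reindex' {m' n' : Type*} [Fintype m'] [DecidableEq m'] [Fintype n'] [DecidableEq n']
    (e : m' ≃ n') (M : Matrix m' m' ℂ) :
    NormedSpace.exp (Matrix.reindex e e M) = Matrix.reindex e e (NormedSpace.exp M) := by
  letI : SeminormedRing (Matrix m' m' ℂ) := Matrix.linftyOpSemiNormedRing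
  letI : NormedRing (Matrix m' m' ℂ) := Matrix.linftyOpNormedRing
  letI : NormedAlgebra ℂ (Matrix m' m' ℂ) := Matrix.linftyOpNormedAlgebra
  letI : SeminormedRing (Matrix n' n' ℂ) := Matrix.linftyOpSemiNormedRing
  letI : NormedRing (Matrix n' n' ℂ) := Matrix.linftyOpNormedRing
  letI : NormedAlgebra ℂ (Matrix n' n' ℂ) := Matrix.linftyOpNormedAlgebra
  letI : NormedAlgebra ℚ (Matrix m' m' ℂ) := Matrix.linftyOpNormedAlgebra
  letI : NormedAlgebra ℚ (Matrix n' n' ℂ) := Matrix.linftyOpNormedAlgebra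
  have hc : Continuous (Matrix.reindexAlgEquiv ℂ ℂ e) := by
    show Continuous fun M : Matrix m' m' ℂ => Matrix.reindex e e M
    exact continuous_id.matrix_reindex _ _
  exact (map_exp (Matrix.reindexAlgEquiv ℂ ℂ e) hc M).symm

/- ### Main theorem -/

/-- Conditional characteristic function formula: `(e(u)ᵀ ⊗ I) exp(s𝐐) (e_k ⊗ x)`. -/
theorem stmt_9 (d : ℕ) (hd : 1 ≤ d) (n : ℕ)
    (Q : Matrix (Fin d) (Fin d) ℝ) (l : Fin d → ℝ)
    (Qc : Matrix (Fin d) (Fin d) ℂ) (hQc : Qc = Q.map (Complex.ofReal))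
    (lc : Fin d → ℂ) (hlc : lc = fun i => (l i : ℂ))
    (A : Matrix (Fin (n + 1)) (Fin (n + 1)) ℂ)
    (hA : ∀ i j : Fin (n + 1), A i j =
      if i = j then -((n - (i : ℕ) : ℕ) : ℂ)
      else if (i : ℕ) = (j : ℕ) + 1 then ((n - (j : ℕ) : ℕ) : ℂ) else 0)
    (bQ : Matrix (Fin (n + 1) × Fin d) (Fin (n + 1) × Fin d) ℂ)
    (hbQ : bQ = A ⊗ₖ Matrix.diagonal lc + (1 : Matrix (Fin (n + 1)) (Fin (n + 1)) ℂ) ⊗ₖ Qc)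
    (u s : ℝ) (x : Fin d → ℂ) (k : Fin (n + 1))
    (v : Fin (n + 1) × Fin d → ℂ)
    (hv : v = fun p => if p.1 = k then x p.2 else 0) :
    (fun a : Fin d => ∑ j : Fin (n + 1),
        Complex.exp (Complex.I * u * (j : ℕ)) * (NormedSpace.exp ((s : ℂ) • bQ) *ᵥ v) (j, a)) =
      ∑ j ∈ Finset.Icc (k : ℕ) n,
        ((Nat.choose (n - k) (j - (k : ℕ)) : ℂ) *
            (1 - Complex.exp (Complex.I * u)) ^ (n - j) * Complex.exp (Complex.I * u * j)) •
          (NormedSpace.exp ((s : ℂ) • (Qc - ((n - j : ℕ) : ℂ) • Matrix.diagonal lc)) *ᵥ x) := by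
  set D := Matrix.diagonal lc with hD
  set z := Complex.exp (Complex.I * u) with hz
  -- eigen decomposition
  have hAS : A * Sm n = Sm n * Lam n := eigen n A hA
  have hST : Sm n * Tm n = 1 := SmTm n
  have hTS : Tm n * Sm n = 1 := mul_eq_one_comm.mp hST
  have hSTk : (Sm n ⊗ₖ (1 : Matrix (Fin d) (Fin d) ℂ)) * (Tm n ⊗ₖ 1) = 1 := by
    rw [← Matrix.mul_kronecker_mul, hST, Matrix.one_mul, Matrix.one_kronecker_one]
  have hTSk : (Tm n ⊗ₖ (1 : Matrix (Fin d) (Fin d) ℂ)) * (Sm n ⊗ₖ 1) = 1 := by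
    rw [← Matrix.mul_kronecker_mul, hTS, Matrix.one_mul, Matrix.one_kronecker_one]
  set B := Lam n ⊗ₖ D + (1 : Matrix (Fin (n+1)) (Fin (n+1)) ℂ) ⊗ₖ Qc with hB
  have h1 : bQ * (Sm n ⊗ₖ (1 : Matrix (Fin d) (Fin d) ℂ)) = (Sm n ⊗ₖ 1) * B := by
    rw [hbQ, hB, add_mul, mul_add, ← Matrix.mul_kronecker_mul, ← Matrix.mul_kronecker_mul,
      ← Matrix.mul_kronecker_mul, ← Matrix.mul_kronecker_mul, hAS]
    simp only [Matrix.mul_one, Matrix.one_mul]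
  have hconj : bQ = (Sm n ⊗ₖ (1 : Matrix (Fin d) (Fin d) ℂ)) * B * (Tm n ⊗ₖ 1) := by
    calc bQ = bQ * ((Sm n ⊗ₖ 1) * (Tm n ⊗ₖ 1)) := by rw [hSTk, Matrix.mul_one]
      _ = (bQ * (Sm n ⊗ₖ 1)) * (Tm n ⊗ₖ 1) := by rw [Matrix.mul_assoc]
      _ = (Sm n ⊗ₖ 1) * B * (Tm n ⊗ₖ 1) := by rw [h1]
  -- units
  let U : (Matrix (Fin (n+1) × Fin d) (Fin (n+1) × Fin d) ℂ)ˣ :=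
    ⟨Sm n ⊗ₖ 1, Tm n ⊗ₖ 1, hSTk, hTSk⟩
  have hexp1 : NormedSpace.exp ((s:ℂ) • bQ)
      = (Sm n ⊗ₖ (1 : Matrix (Fin d) (Fin d) ℂ)) * NormedSpace.exp ((s:ℂ) • B) * (Tm n ⊗ₖ 1) := by
    have hsc : (s:ℂ) • bQ = (U : Matrix (Fin (n+1) × Fin d) (Fin (n+1) × Fin d) ℂ) *
        ((s:ℂ) • B) * ((U⁻¹ : (Matrix (Fin (n+1) × Fin d) (Fin (n+1) × Fin d) ℂ)ˣ) :
          Matrix (Fin (n+1) × Fin d) (Fin (n+1) × Fin d) ℂ) := by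
      show (s:ℂ) • bQ = (Sm n ⊗ₖ 1) * ((s:ℂ) • B) * (Tm n ⊗ₖ 1)
      rw [hconj, Matrix.mul_smul, Matrix.smul_mul]
    rw [hsc, Matrix.exp_units_conj]
    rfl
  -- block diagonal structure
  set g : Fin (n+1) → Matrix (Fin d) (Fin d) ℂ :=
    fun j => (s:ℂ) • (Qc - ((n - (j:ℕ) : ℕ) : ℂ) • D) with hg
  set σ : (Fin d × Fin (n+1)) ≃ (Fin (n+1) × Fin d) := Equiv.prodComm _ _ with hσ
  have hBD : (s:ℂ) • B = Matrix.reindex σ σ (Matrix.blockDiagonal g) := by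
    ext ⟨j, a⟩ ⟨m, b⟩
    simp only [hB, Matrix.smul_apply, Matrix.add_apply, Matrix.kroneckerMap_apply,
      Matrix.reindex_apply, Matrix.submatrix_apply, Matrix.blockDiagonal_apply, hσ,
      Equiv.prodComm_symm, Equiv.prodComm_apply, Prod.swap_prod_mk, Lam,
      Matrix.diagonal_apply, Matrix.one_apply, hg, Matrix.sub_apply, smul_eq_mul]
    by_cases hjm : j = m
    · rw [if_pos hjm, if_pos hjm, if_pos hjm]
      ring
    · rw [if_neg hjm, if_neg hjm, if_neg hjm]
      ring
  have hexp2 : NormedSpace.exp ((s:ℂ) • B)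
      = Matrix.reindex σ σ (Matrix.blockDiagonal (fun j => NormedSpace.exp (g j))) := by
    rw [hBD, exp_reindex', Matrix.exp_blockDiagonal]
    have hpi : NormedSpace.exp g = fun j => NormedSpace.exp (g j) := by
      letI : SeminormedRing (Matrix (Fin d) (Fin d) ℂ) := Matrix.linftyOpSemiNormedRing
      letI : NormedRing (Matrix (Fin d) (Fin d) ℂ) := Matrix.linftyOpNormedRing
      letI : NormedAlgebra ℂ (Matrix (Fin d) (Fin d) ℂ) := Matrix.linftyOpNormedAlgebra
      letI : NormedAlgebra ℚ (Matrix (Fin d) (Fin d) ℂ) := Matrix.linftyOpNormedAlgebra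
      exact Pi.exp_def g
    rw [hpi]
  -- compute mulVec stepwise
  have hw1 : (Tm n ⊗ₖ (1 : Matrix (Fin d) (Fin d) ℂ)) *ᵥ v
      = fun p => Tm n p.1 k * x p.2 := by
    funext ⟨p, b⟩
    simp only [Matrix.mulVec, dotProduct, Fintype.sum_prod_type, hv,
      Matrix.kroneckerMap_apply, Matrix.one_apply, mul_ite, ite_mul, mul_zero, zero_mul,
      mul_one]
    simp [Finset.sum_ite_eq, Finset.sum_ite_eq']
  have hw2 : (Matrix.reindex σ σ (Matrix.blockDiagonal (fun j => NormedSpace.exp (g j)))) *ᵥ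
        (fun p : Fin (n+1) × Fin d => Tm n p.1 k * x p.2)
      = fun p => Tm n p.1 k * ((NormedSpace.exp (g p.1)) *ᵥ x) p.2 := by
    funext ⟨j, a⟩
    simp only [Matrix.mulVec, dotProduct, Fintype.sum_prod_type,
      Matrix.reindex_apply, Matrix.submatrix_apply, hσ, Equiv.prodComm_symm,
      Equiv.prodComm_apply, Prod.swap_prod_mk, Matrix.blockDiagonal_apply,
      ite_mul, zero_mul, Finset.mul_sum]
    rw [Finset.sum_comm]
    simp [Finset.sum_ite_eq, Finset.sum_ite_eq']
    ring_nf
    apply Finset.sum_congr rfl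
    intro b _
    ring
  have hw3 : (Sm n ⊗ₖ (1 : Matrix (Fin d) (Fin d) ℂ)) *ᵥ
        (fun p : Fin (n+1) × Fin d => Tm n p.1 k * ((NormedSpace.exp (g p.1)) *ᵥ x) p.2)
      = fun p => ∑ q : Fin (n+1), Sm n p.1 q * (Tm n q k * ((NormedSpace.exp (g q)) *ᵥ x) p.2) := by
    funext ⟨j, a⟩
    simp only [Matrix.mulVec, dotProduct, Fintype.sum_prod_type,
      Matrix.kroneckerMap_apply, Matrix.one_apply, mul_ite, ite_mul, mul_zero, zero_mul,
      mul_one]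
    apply Finset.sum_congr rfl
    intro q _
    simp [Finset.sum_ite_eq, Finset.sum_ite_eq', mul_assoc]
  funext a
  rw [hexp1, ← Matrix.mulVec_mulVec, ← Matrix.mulVec_mulVec, hw1, hexp2, hw2, hw3]
  simp only []
  -- swap the sums
  have hzj : ∀ j : Fin (n+1), Complex.exp (Complex.I * u * ((j:ℕ):ℂ)) = z ^ (j:ℕ) := by
    intro j
    rw [hz, mul_comm (Complex.I * (u:ℂ)) _, Complex.exp_nat_mul]
  calc (∑ j : Fin (n+1), Complex.exp (Complex.I * u * ((j:ℕ):ℂ)) *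
          ∑ q : Fin (n+1), Sm n j q * (Tm n q k * ((NormedSpace.exp (g q)) *ᵥ x) a))
      = ∑ q : Fin (n+1), (∑ j : Fin (n+1), z ^ (j:ℕ) * Sm n j q) *
          (Tm n q k * ((NormedSpace.exp (g q)) *ᵥ x) a) := by
        simp_rw [hzj, Finset.mul_sum, Finset.sum_mul]
        rw [Finset.sum_comm]
        apply Finset.sum_congr rfl; intro q _
        apply Finset.sum_congr rfl; intro j _
        ring
    _ = ∑ q : Fin (n+1), (z ^ (q:ℕ) * (1-z)^(n-(q:ℕ))) *
          (Tm n q k * ((NormedSpace.exp (g q)) *ᵥ x) a) := by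
        apply Finset.sum_congr rfl; intro q _
        congr 1
        have hrow : ∀ p : Fin (n+1), z ^ (p:ℕ) * Sm n p q
            = z ^ (p:ℕ) * (if (q:ℕ) ≤ (p:ℕ) then
                ((-1:ℂ)^((p:ℕ)-(q:ℕ)) * (((n-(q:ℕ)).choose ((p:ℕ)-(q:ℕ)) : ℕ):ℂ)) else 0) :=
          fun p => rfl
        rw [Finset.sum_congr rfl (fun p _ => hrow p)]
        rw [Fin.sum_univ_eq_sum_range (fun p => z ^ p * (if (q:ℕ) ≤ p then
              ((-1:ℂ)^(p-(q:ℕ)) * (((n-(q:ℕ)).choose (p-(q:ℕ)) : ℕ):ℂ)) else 0))]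
        exact row_sum n q q.is_le z
    _ = ∑ q ∈ Finset.range (n+1), (z ^ q * (1-z)^(n-q)) *
          ((if (k:ℕ) ≤ q then (((n-(k:ℕ)).choose (q-(k:ℕ)) : ℕ):ℂ) else 0) *
            ((NormedSpace.exp ((s:ℂ) • (Qc - ((n - q : ℕ) : ℂ) • D)) *ᵥ x) a)) := by
        rw [← Fin.sum_univ_eq_sum_range (fun q => (z ^ q * (1-z)^(n-q)) *
          ((if (k:ℕ) ≤ q then (((n-(k:ℕ)).choose (q-(k:ℕ)) : ℕ):ℂ) else 0) *
            ((NormedSpace.exp ((s:ℂ) • (Qc - ((n - q : ℕ) : ℂ) • D)) *ᵥ x) a)))]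
        apply Finset.sum_congr rfl; intro q _
        rfl
    _ = ∑ j ∈ Finset.Icc (k : ℕ) n,
        ((Nat.choose (n - k) (j - (k : ℕ)) : ℂ) *
            (1 - z) ^ (n - j) * Complex.exp (Complex.I * u * (j:ℕ))) *
          ((NormedSpace.exp ((s : ℂ) • (Qc - ((n - j : ℕ) : ℂ) • D)) *ᵥ x) a) := by
        rw [← Finset.sum_subset (show Finset.Icc (k:ℕ) n ⊆ Finset.range (n+1) by
            intro q hq; simp only [Finset.mem_Icc] at hq; simp only [Finset.mem_range]; omega)]
        · apply Finset.sum_congr rfl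
          intro q hq
          simp only [Finset.mem_Icc] at hq
          rw [if_pos hq.1]
          have : Complex.exp (Complex.I * u * (q:ℕ)) = z ^ q := by
            rw [hz, mul_comm (Complex.I * (u:ℂ)) _, Complex.exp_nat_mul]
          rw [this]
          ring
        · intro q hq hnq
          simp only [Finset.mem_Icc, not_and, Finset.mem_range] at hnq hq
          rw [if_neg (show ¬ (k:ℕ) ≤ q from fun h => absurd (hnq h) (by omega))]
          ring
  rw [Finset.sum_apply]
  apply Finset.sum_congr rfl
  intro j hj
  simp only [Pi.smul_apply, smul_eq_mul]
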